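/- Let s be a permutation of a set A with finite support and let C ⊆ A be finite with the following property: every x ∈ mov(s) \ C satisfies s(x) ∈ C. If furthermore every point of mov(s) \ C has its s-preimage in C, then s is uniquely determined by the pair (s ▷ C, {x ∈ C | s(x) ∈ A \ C}) together with the values of s on {x ∈ C | s(x) ∉ C}; formally: if s, t are two such permutations with s ▷ C = t ▷ C, {x ∈ C | s(x) ∉ C} = {x ∈ C | t(x) ∉ C}, and s(x) = t(x) for all x ∈ C with s(x) ∉ C, then s = t. -/

import Mathlib

/-- A permutation `s` with finite support, such that every point moved by `s`
outside `C` is mapped into `C` by both `s` and `s⁻¹`, is determined by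
`s ▷ C` (the first-return map on `C`), the set `{x ∈ C | s x ∉ C}`, and the
values of `s` on that set. -/
theorem stmt_18 {A : Type*} (s t : Equiv.Perm A) (C : Set A) (hCfin : C.Finite)
    (hs : {a | s a ≠ a}.Finite) (ht : {a | t a ≠ a}.Finite)
    (hsC : ∀ x, s x ≠ x → x ∉ C → s x ∈ C ∧ s⁻¹ x ∈ C)
    (htC : ∀ x, t x ≠ x → x ∉ C → t x ∈ C ∧ t⁻¹ x ∈ C)
    (hret : ∀ x ∈ C, ∀ i j : ℕ,
      (s ^ (i + 1)) x ∈ C → (∀ i' < i, (s ^ (i' + 1)) x ∉ C) →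
      (t ^ (j + 1)) x ∈ C → (∀ j' < j, (t ^ (j' + 1)) x ∉ C) →
      (s ^ (i + 1)) x = (t ^ (j + 1)) x)
    (hbd : {x ∈ C | s x ∉ C} = {x ∈ C | t x ∉ C})
    (hval : ∀ x ∈ C, s x ∉ C → s x = t x) :
    s = t := by
  ext x
  by_cases hx : x ∈ C
  · by_cases hsx : s x ∈ C
    · have htx : t x ∈ C := by
        by_contra h
        have hmem : x ∈ {x ∈ C | t x ∉ C} := ⟨hx, h⟩
        rw [← hbd] at hmem
        exact hmem.2 hsx
      have := hret x hx 0 0 (by simpa using hsx) (by omega) (by simpa using htx)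
        (by omega)
      simpa using this
    · exact hval x hx hsx
  · by_cases hfix : s x = x
    · rw [hfix]
      by_contra hne
      have htx : t x ≠ x := fun h => hne h.symm
      have h1 := htC x htx hx
      have hyC : t⁻¹ x ∈ C := h1.2
      have hty : t (t⁻¹ x) = x := t.apply_symm_apply x
      have htyC : t (t⁻¹ x) ∉ C := by rw [hty]; exact hx
      have hmem : t⁻¹ x ∈ {x ∈ C | s x ∉ C} := by rw [hbd]; exact ⟨hyC, htyC⟩
      have hsy := hval _ hyC hmem.2
      have heq : s (t⁻¹ x) = s x := by rw [hsy, hty, hfix]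
      have : t⁻¹ x = x := s.injective heq
      exact hx (this ▸ hyC)
    · have h1 := hsC x hfix hx
      have hyC : s⁻¹ x ∈ C := h1.2
      have hsy : s (s⁻¹ x) = x := s.apply_symm_apply x
      have hsyC : s (s⁻¹ x) ∉ C := by rw [hsy]; exact hx
      have hty : t (s⁻¹ x) = x := by rw [← hval _ hyC hsyC]; exact hsy
      have htx : t x ≠ x := by
        intro h
        have : s⁻¹ x = x := t.injective (by rw [hty, h])
        exact hx (this ▸ hyC)
      have h2 := htC x htx hx
      have key := hret (s⁻¹ x) hyC 1 1
        (by
          show (s ^ 2) (s⁻¹ x) ∈ C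
          rw [sq, Equiv.Perm.mul_apply, hsy]; exact h1.1)
        (by
          intro i hi
          have : i = 0 := by omega
          subst this
          show (s ^ 1) (s⁻¹ x) ∉ C
          rw [pow_one, hsy]; exact hx)
        (by
          show (t ^ 2) (s⁻¹ x) ∈ C
          rw [sq, Equiv.Perm.mul_apply, hty]; exact h2.1)
        (by
          intro j hj
          have : j = 0 := by omega
          subst this
          show (t ^ 1) (s⁻¹ x) ∉ C
          rw [pow_one, hty]; exact hx)
      calc s x = (s ^ 2) (s⁻¹ x) := by rw [sq, Equiv.Perm.mul_apply, hsy]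
        _ = (t ^ 2) (s⁻¹ x) := key
        _ = t x := by rw [sq, Equiv.Perm.mul_apply, hty]
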